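/- Arity reduction: for every n and every r ≤ AL(H, n), there exists an ambiguous shattered H-tree T with Rank(T) ≥ r, Depth(T) ≤ n, and every internal vertex having at most VC(Λ(H)) + 1 children. -/
import Mathlib


/-- A `Y`-lattice: a family of subsets of `Y` containing `Y` itself and closed
under binary intersections. -/
def IsYLattice {Y : Type} (L : Set (Set Y)) : Prop :=
  Set.univ ∈ L ∧ ∀ A ∈ L, ∀ B ∈ L, A ∩ B ∈ L

/-- The `Λ`-hull of `A`: the intersection of all members of `Λ` containing `A`. -/
def latHull {Y : Type} (L : Set (Set Y)) (A : Set Y) : Set Y :=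
  ⋂₀ {B | B ∈ L ∧ A ⊆ B}

/-- The `Λ`-complexity of `A`: minimal cardinality of `B ⊆ A` with `A ⊆ hull(B)`. -/
noncomputable def latComplexity {Y : Type} (L : Set (Set Y)) (A : Set Y) : ℕ :=
  sInf {n : ℕ | ∃ B : Set Y, B ⊆ A ∧ B.ncard = n ∧ A ⊆ latHull L B}

/-- The pivot dimension of `Λ`: maximal `Λ`-complexity of an element of `Λ`. -/
noncomputable def PDim {Y : Type} (L : Set (Set Y)) : ℕ :=
  sSup {n : ℕ | ∃ A ∈ L, n = latComplexity L A}

/-- `Λ` shatters `S` if every subset of `S` is a trace `S ∩ C` for some `C ∈ Λ`. -/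
def Shatters {Y : Type} (L : Set (Set Y)) (S : Set Y) : Prop :=
  ∀ B ⊆ S, ∃ C ∈ L, S ∩ C = B

/-- VC dimension of the family `Λ`. -/
noncomputable def VCdim {Y : Type} (L : Set (Set Y)) : ℕ :=
  sSup {n : ℕ | ∃ S : Set Y, Shatters L S ∧ S.ncard = n}

/-- `Λ(H)`: the minimal `Y`-lattice containing every value `h x` for `h ∈ H`. -/
def LamH {X Y : Type} (H : Set (X → Set Y)) : Set (Set Y) :=
  {A | ∀ L : Set (Set Y), IsYLattice L → (∀ h ∈ H, ∀ x : X, h x ∈ L) → A ∈ L}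

/-- A finite rooted tree: vertices, a root, and a parent map under which every
vertex reaches the root. -/
structure RTree where
  V : Type
  [fin : Fintype V]
  root : V
  parent : V → V
  parent_root : parent root = root
  reaches : ∀ v : V, ∃ k : ℕ, parent^[k] v = root

namespace RTree

/-- Children of a vertex (the root is not a child of anything). -/
def children (t : RTree) (v : t.V) : Set t.V := {w | t.parent w = v ∧ w ≠ t.root}

def IsLeaf (t : RTree) (v : t.V) : Prop := t.children v = ∅

/-- `a` is an ancestor (or equal to) `u`. -/
def Anc (t : RTree) (a u : t.V) : Prop := ∃ k : ℕ, t.parent^[k] u = a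

noncomputable def depthOf (t : RTree) (v : t.V) : ℕ := sInf {k : ℕ | t.parent^[k] v = t.root}

noncomputable def depth (t : RTree) : ℕ := sSup {n : ℕ | ∃ v : t.V, n = t.depthOf v}

end RTree

/-- An ambiguous shattered `H`-tree: internal vertices carry instances, non-root
vertices (identified with the edges to their parents) carry labels, distinct among
siblings, leaves carry hypotheses from `H` compatible with all edge labels above
them, and `E0` selects exactly one child edge of each internal vertex. -/
structure AmbTree (X Y : Type) (H : Set (X → Set Y)) where
  t : RTree
  xlab : t.V → X
  ylab : t.V → Y
  hlab : t.V → (X → Set Y)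
  E0 : Set t.V
  e0_ne_root : ∀ a ∈ E0, a ≠ t.root
  e0_unique : ∀ v : t.V, (t.children v).Nonempty → ∃! a : t.V, a ∈ t.children v ∩ E0
  sib_distinct : ∀ a b : t.V, a ≠ t.root → b ≠ t.root →
    t.parent a = t.parent b → a ≠ b → ylab a ≠ ylab b
  hlab_mem : ∀ u : t.V, t.IsLeaf u → hlab u ∈ H
  path_mem : ∀ u a : t.V, t.IsLeaf u → t.Anc a u → a ≠ t.root →
    ylab a ∈ hlab u (xlab (t.parent a))

namespace AmbTree

variable {X Y : Type} {H : Set (X → Set Y)}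

/-- Edge `a` (on the root-to-`u` path) is relevant to leaf `u`. -/
def Relevant (T : AmbTree X Y H) (a u : T.t.V) : Prop :=
  a ≠ T.t.root ∧ T.t.Anc a u ∧
    (a ∉ T.E0 ∨ ∃ b : T.t.V, T.t.parent b = T.t.parent a ∧ b ≠ T.t.root ∧
      T.ylab b ∉ T.hlab u (T.xlab (T.t.parent a)))

noncomputable def relCount (T : AmbTree X Y H) (u : T.t.V) : ℕ :=
  {a : T.t.V | T.Relevant a u}.ncard

/-- Rank: the minimum over leaves of the number of relevant edges. -/
noncomputable def rank (T : AmbTree X Y H) : ℕ :=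
  sInf {n : ℕ | ∃ u : T.t.V, T.t.IsLeaf u ∧ n = T.relCount u}

noncomputable def depth (T : AmbTree X Y H) : ℕ := T.t.depth

end AmbTree

section HullLemmas

variable {Y : Type}

lemma subset_latHull (L : Set (Set Y)) (A : Set Y) : A ⊆ latHull L A := by
  intro y hy
  exact fun B hB => hB.2 hy

lemma latHull_le {L : Set (Set Y)} {A C : Set Y} (hC : C ∈ L) (h : A ⊆ C) :
    latHull L A ⊆ C :=
  Set.sInter_subset_of_mem ⟨hC, h⟩

lemma latHull_mono (L : Set (Set Y)) {A B : Set Y} (h : A ⊆ B) :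
    latHull L A ⊆ latHull L B := by
  intro y hy C hC
  exact hy C ⟨hC.1, h.trans hC.2⟩

lemma sInter_mem_of_lattice [Finite Y] {L : Set (Set Y)} (hL : IsYLattice L)
    (s : Finset (Set Y)) (hne : s.Nonempty) (hsub : ∀ B ∈ s, B ∈ L) :
    ⋂₀ (↑s : Set (Set Y)) ∈ L := by
  induction hne using Finset.Nonempty.cons_induction with
  | singleton a => simpa using hsub a (by simp)
  | cons a s ha hs ih =>
      have : ⋂₀ (↑(Finset.cons a s ha) : Set (Set Y)) = a ∩ ⋂₀ (↑s : Set (Set Y)) := by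
        simp [Set.sInter_insert]
      rw [this]
      exact hL.2 a (hsub a (by simp)) _ (ih (fun B hB => hsub B (by simp [hB])))

lemma latHull_mem [Finite Y] {L : Set (Set Y)} (hL : IsYLattice L) (A : Set Y) :
    latHull L A ∈ L := by
  have hfin : {B | B ∈ L ∧ A ⊆ B}.Finite := Set.toFinite _
  have hne : (hfin.toFinset).Nonempty := by
    refine ⟨Set.univ, ?_⟩
    simp [hL.1, Set.subset_univ]
  have := sInter_mem_of_lattice hL hfin.toFinset hne (fun B hB => by
    simp only [Set.Finite.mem_toFinset] at hB; exact hB.1)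
  rwa [Set.Finite.coe_toFinset] at this

lemma exists_small_basis [Fintype Y] {L : Set (Set Y)} (hL : IsYLattice L) (A : Set Y) :
    ∃ B : Set Y, B ⊆ A ∧ B.ncard ≤ VCdim L ∧ A ⊆ latHull L B := by
  classical
  set S : Set ℕ := {n : ℕ | ∃ B : Set Y, B ⊆ A ∧ B.ncard = n ∧ A ⊆ latHull L B} with hS
  have hSne : S.Nonempty := ⟨A.ncard, A, subset_refl A, rfl, subset_latHull L A⟩
  obtain ⟨B, hBA, hBcard, hBhull⟩ := Nat.sInf_mem hSne
  refine ⟨B, hBA, ?_, hBhull⟩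
  -- B is shattered by L
  have hshat : Shatters L B := by
    intro T hTB
    refine ⟨latHull L T, latHull_mem hL T, ?_⟩
    apply Set.Subset.antisymm
    · rintro x ⟨hxB, hxH⟩
      by_contra hxT
      have hTsub : T ⊆ B \ {x} := fun y hy =>
        ⟨hTB hy, by rintro rfl; exact hxT hy⟩
      have hx' : x ∈ latHull L (B \ {x}) := latHull_mono L hTsub hxH
      have hBsub : B ⊆ latHull L (B \ {x}) := by
        intro y hy
        by_cases hyx : y = x
        · rwa [hyx]
        · exact subset_latHull L _ ⟨hy, hyx⟩
      have hAsub : A ⊆ latHull L (B \ {x}) :=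
        hBhull.trans (latHull_le (latHull_mem hL _) hBsub)
      have hmem : (B \ {x}).ncard ∈ S :=
        ⟨B \ {x}, (Set.diff_subset).trans hBA, rfl, hAsub⟩
      have hlt : (B \ {x}).ncard < B.ncard :=
        Set.ncard_diff_singleton_lt_of_mem hxB (Set.toFinite B)
      have := Nat.sInf_le hmem
      omega
    · intro x hx
      exact ⟨hTB hx, subset_latHull L T hx⟩
  have hbdd : BddAbove {n : ℕ | ∃ S : Set Y, Shatters L S ∧ S.ncard = n} := by
    refine ⟨Fintype.card Y, ?_⟩
    rintro n ⟨S', _, rfl⟩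
    calc S'.ncard ≤ (Set.univ : Set Y).ncard :=
          Set.ncard_le_ncard (Set.subset_univ _) Set.finite_univ
      _ = Fintype.card Y := by simp [Set.ncard_univ]
  calc B.ncard ≤ VCdim L := le_csSup hbdd ⟨B, hshat, rfl⟩

lemma lamH_lattice {X : Type} (H : Set (X → Set Y)) : IsYLattice (LamH H) := by
  constructor
  · intro L hL _; exact hL.1
  · intro A hA B hB L hL hH
    exact hL.2 A (hA L hL hH) B (hB L hL hH)

lemma mem_lamH {X : Type} {H : Set (X → Set Y)} {h : X → Set Y} (hh : h ∈ H) (x : X) :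
    h x ∈ LamH H := fun _ hL hH => hH h hh x

end HullLemmas

attribute [instance] RTree.fin

namespace RTree

lemma depthOf_set_nonempty (t : RTree) (v : t.V) :
    {k : ℕ | t.parent^[k] v = t.root}.Nonempty := t.reaches v

lemma depthOf_lt_of_child (t : RTree) {v w : t.V} (hw : w ∈ t.children v) :
    t.depthOf v < t.depthOf w := by
  have hmem : t.depthOf w ∈ {k : ℕ | t.parent^[k] w = t.root} :=
    Nat.sInf_mem (t.depthOf_set_nonempty w)
  have hge : ∀ k ∈ {k : ℕ | t.parent^[k] w = t.root}, t.depthOf v < k := by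
    intro k hk
    match k with
    | 0 => exact absurd hk hw.2
    | k + 1 =>
        have : t.parent^[k] v = t.root := by
          have := hk
          simp only [Set.mem_setOf_eq, Function.iterate_succ_apply] at this
          rwa [hw.1] at this
        have h2 := Nat.sInf_le (show k ∈ {k : ℕ | t.parent^[k] v = t.root} from this)
        unfold RTree.depthOf
        omega
  exact hge _ hmem

lemma exists_leaf (t : RTree) : ∃ v : t.V, t.IsLeaf v := by
  have hne : Nonempty t.V := ⟨t.root⟩
  obtain ⟨v, hv⟩ := Finite.exists_max (t.depthOf)
  refine ⟨v, ?_⟩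
  rw [IsLeaf, Set.eq_empty_iff_forall_notMem]
  intro w hw
  exact absurd (hv w) (not_le.mpr (t.depthOf_lt_of_child hw))

end RTree

namespace Prune

variable {X Y : Type} {H : Set (X → Set Y)}
variable (T : AmbTree X Y H) (B : T.t.V → Set Y)

/-- keep the root, all `E0` edges, and edges whose label lies in the selected basis. -/
def Keep (w : T.t.V) : Prop :=
  w = T.t.root ∨ w ∈ T.E0 ∨ T.ylab w ∈ B (T.t.parent w)

/-- a vertex is good if it and all its ancestors are kept. -/
def Good (w : T.t.V) : Prop := ∀ k : ℕ, Keep T B (T.t.parent^[k] w)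

lemma good_root : Good T B T.t.root := by
  intro k
  have : T.t.parent^[k] T.t.root = T.t.root := by
    induction k with
    | zero => rfl
    | succ k ih => rw [Function.iterate_succ_apply, T.t.parent_root, ih]
  rw [this]; exact Or.inl rfl

lemma good_parent {w : T.t.V} (hw : Good T B w) : Good T B (T.t.parent w) := by
  intro k
  have := hw (k + 1)
  rwa [Function.iterate_succ_apply] at this

lemma good_of_keep {w : T.t.V} (hk : Keep T B w) (hp : Good T B (T.t.parent w)) :
    Good T B w := by
  intro k
  match k with
  | 0 => exact hk
  | k + 1 => rw [Function.iterate_succ_apply]; exact hp k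

/-- the pruned tree. -/
noncomputable def t' : RTree where
  V := {w : T.t.V // Good T B w}
  fin := Fintype.ofFinite _
  root := ⟨T.t.root, good_root T B⟩
  parent := fun w => ⟨T.t.parent w.1, good_parent T B w.2⟩
  parent_root := Subtype.ext T.t.parent_root
  reaches := by
    intro v
    obtain ⟨k, hk⟩ := T.t.reaches v.1
    refine ⟨k, Subtype.ext ?_⟩
    have : ∀ (j : ℕ) (w : {w : T.t.V // Good T B w}),
        (((fun w => (⟨T.t.parent w.1, good_parent T B w.2⟩ :
          {w : T.t.V // Good T B w}))^[j] w)).1 = T.t.parent^[j] w.1 := by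
      intro j
      induction j with
      | zero => intro w; rfl
      | succ j ih =>
          intro w
          rw [Function.iterate_succ_apply, Function.iterate_succ_apply]
          exact ih _
    rw [this]; exact hk

lemma iterate_val (w : (t' T B).V) (k : ℕ) :
    (((t' T B).parent)^[k] w).1 = T.t.parent^[k] w.1 := by
  induction k generalizing w with
  | zero => rfl
  | succ k ih =>
      rw [Function.iterate_succ_apply, Function.iterate_succ_apply]
      exact ih _

lemma root_val : ((t' T B).root).1 = T.t.root := rfl

lemma parent_val (w : (t' T B).V) : ((t' T B).parent w).1 = T.t.parent w.1 := rfl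

lemma ne_root_iff (w : (t' T B).V) : w ≠ (t' T B).root ↔ w.1 ≠ T.t.root := by
  constructor
  · intro h h'
    exact h (Subtype.ext h')
  · intro h h'
    exact h (congrArg Subtype.val h')

lemma mem_children_iff {v w : (t' T B).V} :
    w ∈ (t' T B).children v ↔ w.1 ∈ T.t.children v.1 := by
  constructor
  · rintro ⟨h1, h2⟩
    exact ⟨congrArg Subtype.val h1, (ne_root_iff T B w).mp h2⟩
  · rintro ⟨h1, h2⟩
    exact ⟨Subtype.ext h1, (ne_root_iff T B w).mpr h2⟩

lemma anc_of_anc {a u : (t' T B).V} (h : (t' T B).Anc a u) : T.t.Anc a.1 u.1 := by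
  obtain ⟨k, hk⟩ := h
  exact ⟨k, by rw [← iterate_val T B u k, hk]⟩

lemma keep_of_good {w : (t' T B).V} : Keep T B w.1 := w.2 0

/-- good vertices above a good vertex. -/
lemma good_anc {a u : T.t.V} (hu : Good T B u) (h : T.t.Anc a u) : Good T B a := by
  obtain ⟨k, hk⟩ := h
  intro j
  rw [← hk, ← Function.iterate_add_apply]
  exact hu (j + k)

/-- the E0 child of an internal good vertex is good, hence new children of
internal vertices are nonempty. -/
lemma children_nonempty {v : (t' T B).V} (h : (T.t.children v.1).Nonempty) :
    ((t' T B).children v).Nonempty := by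
  obtain ⟨a, ⟨⟨ha1, ha2⟩, ha3⟩, _⟩ := T.e0_unique v.1 h
  have hga : Good T B a := by
    refine good_of_keep T B (Or.inr (Or.inl ha3)) ?_
    rw [ha1]; exact v.2
  exact ⟨⟨a, hga⟩, (mem_children_iff T B).mpr ⟨ha1, ha2⟩⟩

lemma leaf_of_leaf {u : (t' T B).V} (h : (t' T B).IsLeaf u) : T.t.IsLeaf u.1 := by
  rw [RTree.IsLeaf, Set.eq_empty_iff_forall_notMem]
  intro w hw
  by_contra
  obtain ⟨w', hw'⟩ := children_nonempty T B ⟨w, hw⟩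
  rw [RTree.IsLeaf, Set.eq_empty_iff_forall_notMem] at h
  exact h w' hw'

/-- the pruned ambiguous tree. -/
noncomputable def T' : AmbTree X Y H where
  t := t' T B
  xlab := fun w => T.xlab w.1
  ylab := fun w => T.ylab w.1
  hlab := fun w => T.hlab w.1
  E0 := {w | w.1 ∈ T.E0}
  e0_ne_root := by
    intro a ha
    rw [ne_root_iff]
    exact T.e0_ne_root a.1 ha
  e0_unique := by
    intro v hv
    obtain ⟨w, hw⟩ := hv
    have hold : (T.t.children v.1).Nonempty := ⟨w.1, (mem_children_iff T B).mp hw⟩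
    obtain ⟨a, ⟨⟨ha1, ha2⟩, ha3⟩, hauniq⟩ := T.e0_unique v.1 hold
    have hga : Good T B a := by
      refine good_of_keep T B (Or.inr (Or.inl ha3)) ?_
      rw [ha1]; exact v.2
    refine ⟨⟨a, hga⟩, ⟨(mem_children_iff T B).mpr ⟨ha1, ha2⟩, ha3⟩, ?_⟩
    rintro b ⟨hb1, hb2⟩
    exact Subtype.ext (hauniq b.1 ⟨(mem_children_iff T B).mp hb1, hb2⟩)
  sib_distinct := by
    intro a b ha hb hp hab
    exact T.sib_distinct a.1 b.1 ((ne_root_iff T B a).mp ha) ((ne_root_iff T B b).mp hb)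
      (congrArg Subtype.val hp) (fun h => hab (Subtype.ext h))
  hlab_mem := by
    intro u hu
    exact T.hlab_mem u.1 (leaf_of_leaf T B hu)
  path_mem := by
    intro u a hu ha har
    exact T.path_mem u.1 a.1 (leaf_of_leaf T B hu) (anc_of_anc T B ha)
      ((ne_root_iff T B a).mp har)

end Prune

namespace Prune

variable {X Y : Type} {H : Set (X → Set Y)}
variable (T : AmbTree X Y H) (B : T.t.V → Set Y)

lemma depthOf_eq (v : (t' T B).V) : (t' T B).depthOf v = T.t.depthOf v.1 := by
  unfold RTree.depthOf
  congr 1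
  ext k
  constructor
  · intro hk
    have := congrArg Subtype.val hk
    rwa [iterate_val] at this
  · intro hk
    exact Subtype.ext (by rw [iterate_val]; exact hk)

lemma depth_set_bdd (t : RTree) : BddAbove {n : ℕ | ∃ v : t.V, n = t.depthOf v} := by
  refine Set.Finite.bddAbove (Set.Finite.subset (Set.finite_range t.depthOf) ?_)
  rintro n ⟨v, rfl⟩
  exact ⟨v, rfl⟩

lemma depth_le : (T' T B).depth ≤ T.depth := by
  unfold AmbTree.depth RTree.depth
  refine csSup_le ⟨(t' T B).depthOf (t' T B).root, (t' T B).root, rfl⟩ ?_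
  rintro m ⟨v, rfl⟩
  have : (T' T B).t.depthOf v = T.t.depthOf v.1 := depthOf_eq T B v
  rw [this]
  exact le_csSup (depth_set_bdd T.t) ⟨v.1, rfl⟩

lemma relevant_lift [Finite Y]
    (hBsub : ∀ v : T.t.V, B v ⊆ T.ylab '' (T.t.children v))
    (hBhull : ∀ v : T.t.V, T.ylab '' (T.t.children v) ⊆ latHull (LamH H) (B v))
    {u : (t' T B).V} (hu : (t' T B).IsLeaf u) {a : T.t.V}
    (hga : Good T B a) (ha : T.Relevant a u.1) :
    (T' T B).Relevant ⟨a, hga⟩ u := by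
  obtain ⟨haroot, hanc, hrel⟩ := ha
  refine ⟨(ne_root_iff T B _).mpr haroot, ?_, ?_⟩
  · obtain ⟨k, hk⟩ := hanc
    exact ⟨k, Subtype.ext ((iterate_val T B u k).trans hk)⟩
  · rcases hrel with hne0 | ⟨b, hb1, hb2, hb3⟩
    · exact Or.inl hne0
    · right
      set v : T.t.V := T.t.parent a with hv
      set hset : Set Y := T.hlab u.1 (T.xlab v) with hh
      have hmem : hset ∈ LamH H :=
        mem_lamH (T.hlab_mem u.1 (leaf_of_leaf T B hu)) _
      -- some element of B v lies outside hset
      have hex : ∃ y ∈ B v, y ∉ hset := by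
        by_contra hcon
        push_neg at hcon
        have hsub2 : latHull (LamH H) (B v) ⊆ hset := latHull_le hmem hcon
        have : T.ylab b ∈ latHull (LamH H) (B v) :=
          hBhull v ⟨b, ⟨by rw [hb1], hb2⟩, rfl⟩
        exact hb3 (hsub2 this)
      obtain ⟨y, hyB, hyh⟩ := hex
      obtain ⟨c, hc, hcy⟩ := hBsub v hyB
      have hkc : Keep T B c := Or.inr (Or.inr (by rw [hc.1, hcy]; exact hyB))
      have hgc : Good T B c := by
        refine good_of_keep T B hkc ?_
        rw [hc.1, hv]
        exact good_parent T B hga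
      refine ⟨⟨c, hgc⟩, Subtype.ext ?_, (ne_root_iff T B _).mpr hc.2, ?_⟩
      · exact hc.1
      · show T.ylab c ∉ T.hlab u.1 (T.xlab (T.t.parent a))
        rw [hcy]
        exact hyh

lemma relCount_le [Finite Y]
    (hBsub : ∀ v : T.t.V, B v ⊆ T.ylab '' (T.t.children v))
    (hBhull : ∀ v : T.t.V, T.ylab '' (T.t.children v) ⊆ latHull (LamH H) (B v))
    {u : (t' T B).V} (hu : (t' T B).IsLeaf u) :
    T.relCount u.1 ≤ (T' T B).relCount u := by
  unfold AmbTree.relCount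
  have hsub : {a : T.t.V | T.Relevant a u.1} ⊆
      Subtype.val '' {a : (T' T B).t.V | (T' T B).Relevant a u} := by
    intro a ha
    have hga : Good T B a := good_anc T B u.2 ha.2.1
    exact ⟨⟨a, hga⟩, relevant_lift T B hBsub hBhull hu hga ha, rfl⟩
  calc {a : T.t.V | T.Relevant a u.1}.ncard
      ≤ (Subtype.val '' {a : (T' T B).t.V | (T' T B).Relevant a u}).ncard :=
        Set.ncard_le_ncard hsub (Set.toFinite _)
    _ = {a : (T' T B).t.V | (T' T B).Relevant a u}.ncard :=
        Set.ncard_image_of_injective _ Subtype.val_injective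

lemma rank_ge [Finite Y]
    (hBsub : ∀ v : T.t.V, B v ⊆ T.ylab '' (T.t.children v))
    (hBhull : ∀ v : T.t.V, T.ylab '' (T.t.children v) ⊆ latHull (LamH H) (B v)) :
    T.rank ≤ (T' T B).rank := by
  unfold AmbTree.rank
  obtain ⟨u0, hu0⟩ := (t' T B).exists_leaf
  refine le_csInf ⟨(T' T B).relCount u0, u0, hu0, rfl⟩ ?_
  rintro m ⟨u, hu, rfl⟩
  calc sInf {n : ℕ | ∃ w : T.t.V, T.t.IsLeaf w ∧ n = T.relCount w}
      ≤ T.relCount u.1 := Nat.sInf_le ⟨u.1, leaf_of_leaf T B hu, rfl⟩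
    _ ≤ (T' T B).relCount u := relCount_le T B hBsub hBhull hu

lemma children_bound [Finite Y]
    (hBsub : ∀ v : T.t.V, B v ⊆ T.ylab '' (T.t.children v))
    (hBcard : ∀ v : T.t.V, (B v).ncard ≤ VCdim (LamH H)) (v : (t' T B).V) :
    ((t' T B).children v).ncard ≤ VCdim (LamH H) + 1 := by
  classical
  set D : Set T.t.V :=
    {w | w ∈ T.t.children v.1 ∧ T.ylab w ∈ B v.1} ∪ (T.t.children v.1 ∩ T.E0) with hD
  have hsub : Subtype.val '' ((t' T B).children v) ⊆ D := by
    rintro _ ⟨w, hw, rfl⟩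
    have hch : w.1 ∈ T.t.children v.1 := (mem_children_iff T B).mp hw
    have hkeep : Keep T B w.1 := keep_of_good T B
    rcases hkeep with h1 | h2 | h3
    · exact absurd h1 hch.2
    · exact Or.inr ⟨hch, h2⟩
    · left
      refine ⟨hch, ?_⟩
      rwa [hch.1] at h3
  have h1 : ((t' T B).children v).ncard = (Subtype.val '' ((t' T B).children v)).ncard :=
    (Set.ncard_image_of_injective _ Subtype.val_injective).symm
  have h2 : (Subtype.val '' ((t' T B).children v)).ncard ≤ D.ncard :=
    Set.ncard_le_ncard hsub (Set.toFinite _)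
  -- bound the two pieces
  have hb1 : {w | w ∈ T.t.children v.1 ∧ T.ylab w ∈ B v.1}.ncard ≤ (B v.1).ncard := by
    have hinj : Set.InjOn T.ylab {w | w ∈ T.t.children v.1 ∧ T.ylab w ∈ B v.1} := by
      intro a ha b hb hab
      by_contra hne
      exact T.sib_distinct a b ha.1.2 hb.1.2 (ha.1.1.trans hb.1.1.symm) hne hab
    have himg : T.ylab '' {w | w ∈ T.t.children v.1 ∧ T.ylab w ∈ B v.1} ⊆ B v.1 := by
      rintro _ ⟨w, hw, rfl⟩; exact hw.2
    calc {w | w ∈ T.t.children v.1 ∧ T.ylab w ∈ B v.1}.ncard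
        = (T.ylab '' {w | w ∈ T.t.children v.1 ∧ T.ylab w ∈ B v.1}).ncard :=
          (Set.ncard_image_of_injOn hinj).symm
      _ ≤ (B v.1).ncard := Set.ncard_le_ncard himg (Set.toFinite _)
  have hb2 : (T.t.children v.1 ∩ T.E0).ncard ≤ 1 := by
    rcases Set.eq_empty_or_nonempty (T.t.children v.1 ∩ T.E0) with he | hne
    · simp [he]
    · have hch : (T.t.children v.1).Nonempty := hne.mono Set.inter_subset_left
      obtain ⟨a, _, hauniq⟩ := T.e0_unique v.1 hch
      have : T.t.children v.1 ∩ T.E0 ⊆ {a} := fun b hb => hauniq b hb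
      calc (T.t.children v.1 ∩ T.E0).ncard ≤ ({a} : Set T.t.V).ncard :=
            Set.ncard_le_ncard this (Set.toFinite _)
        _ = 1 := Set.ncard_singleton a
  calc ((t' T B).children v).ncard ≤ D.ncard := h1 ▸ h2
    _ ≤ {w | w ∈ T.t.children v.1 ∧ T.ylab w ∈ B v.1}.ncard
        + (T.t.children v.1 ∩ T.E0).ncard := Set.ncard_union_le _ _
    _ ≤ VCdim (LamH H) + 1 := add_le_add ((hb1).trans (hBcard v.1)) hb2

end Prune

/-- arity reduction: for every `n` and `r`, if some ambiguous
shattered `H`-tree of depth at most `n` has rank at least `r`, then there is such a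
tree in which moreover every vertex has at most `VC(Λ(H)) + 1` children. -/
theorem arity_reduction {X Y : Type} [Fintype Y] (H : Set (X → Set Y)) (n r : ℕ)
    (h : ∃ T : AmbTree X Y H, T.depth ≤ n ∧ r ≤ T.rank) :
    ∃ T : AmbTree X Y H, T.depth ≤ n ∧ r ≤ T.rank ∧
      ∀ v : T.t.V, (T.t.children v).ncard ≤ VCdim (LamH H) + 1 := by
  classical
  obtain ⟨T, hdep, hrank⟩ := h
  have hbasis : ∀ v : T.t.V, ∃ B : Set Y, B ⊆ T.ylab '' (T.t.children v) ∧
      B.ncard ≤ VCdim (LamH H) ∧ T.ylab '' (T.t.children v) ⊆ latHull (LamH H) B :=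
    fun v => exists_small_basis (lamH_lattice H) _
  choose B hBsub hBcard hBhull using hbasis
  refine ⟨Prune.T' T B, le_trans (Prune.depth_le T B) hdep,
    le_trans hrank (Prune.rank_ge T B hBsub hBhull), ?_⟩
  intro v
  exact Prune.children_bound T B hBsub hBcard v
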